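/- Let C > 0, let n be a positive integer, let c ≥ 2 be an integer, let d be a positive integer, and let λ > 0. Let γ be an n × c matrix of positive reals and let ε be an n × c random matrix such that for every (i,j) and every t > 0, P(|ε_{i,j}| > t) ≤ 2·exp(−C·t²·d / (λ²·γ_{i,j}²)). Let g : ℝ^{n×c} → ℝ be twice continuously differentiable with Hessian operator norm bounded everywhere by M ≥ 0. Then there exists a constant K > 0 depending only on C and n such that for every fixed H ∈ ℝ^{n×c}, with probability at least 0.99: |g(H + ε) − g(H)| ≤ K·λ·√(log c / d)·‖γ‖_F·‖∇g(H)‖_F + (M/2)·K²·λ²·(log c / d)·‖γ‖_F². -/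

import Mathlib

open MeasureTheory

lemma taylor_aux {F : Type*} [NormedAddCommGroup F] [InnerProductSpace ℝ F] [CompleteSpace F]
    (g : F → ℝ) (hg : ContDiff ℝ 2 g) (M : ℝ) (hM : 0 ≤ M)
    (hHess : ∀ X V : F, |fderiv ℝ (fderiv ℝ g) X V V| ≤ M * ‖V‖ ^ 2)
    (H V : F) :
    |g (H + V) - g H| ≤ ‖gradient g H‖ * ‖V‖ + M / 2 * ‖V‖ ^ 2 := by
  have hg1 : Differentiable ℝ g := hg.differentiable (by norm_num)
  have hgf : ContDiff ℝ 1 (fderiv ℝ g) := hg.fderiv_right (by norm_num)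
  have hg2 : Differentiable ℝ (fderiv ℝ g) := hgf.differentiable (by norm_num)
  set u : ℝ → F := fun t => H + t • V with hu_def
  have hu : ∀ t : ℝ, HasDerivAt u V t := by
    intro t
    simpa [hu_def] using ((hasDerivAt_id t).smul_const V).const_add H
  have hφ : ∀ t : ℝ, HasDerivAt (fun s => g (u s)) (fderiv ℝ g (u t) V) t := fun t =>
    (hg1 (u t)).hasFDerivAt.comp_hasDerivAt t (hu t)
  have hφ' : ∀ t : ℝ, HasDerivAt (fun s => fderiv ℝ g (u s) V)
      (fderiv ℝ (fderiv ℝ g) (u t) V V) t := by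
    intro t
    have h1 : HasDerivAt (fun s => fderiv ℝ g (u s)) (fderiv ℝ (fderiv ℝ g) (u t) V) t :=
      (hg2 (u t)).hasFDerivAt.comp_hasDerivAt t (hu t)
    simpa using h1.clm_apply (hasDerivAt_const t V)
  -- bound on increments of φ'
  have hlip : ∀ t ∈ Set.Icc (0:ℝ) 1,
      |fderiv ℝ g (u t) V - fderiv ℝ g (u 0) V| ≤ (M * ‖V‖ ^ 2) * t := by
    intro t ht
    have := Convex.norm_image_sub_le_of_norm_hasDerivWithin_le
      (f := fun s => fderiv ℝ g (u s) V) (f' := fun s => fderiv ℝ (fderiv ℝ g) (u s) V V)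
      (C := M * ‖V‖ ^ 2) (s := Set.univ)
      (fun x _ => (hφ' x).hasDerivWithinAt)
      (fun x _ => by simpa [Real.norm_eq_abs] using hHess (u x) V)
      convex_univ (Set.mem_univ 0) (Set.mem_univ t)
    simpa [Real.norm_eq_abs, abs_of_nonneg ht.1] using this
  -- continuity of φ'
  have hcont : Continuous fun s => fderiv ℝ g (u s) V := by
    have : Continuous (fderiv ℝ g) := hgf.continuous
    have hcu : Continuous u := by fun_prop
    exact (this.comp hcu).clm_apply continuous_const
  -- FTC
  have hFTC : g (u 1) - g (u 0) = ∫ t in (0:ℝ)..1, fderiv ℝ g (u t) V := by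
    exact (intervalIntegral.integral_eq_sub_of_hasDerivAt
      (fun t _ => hφ t) (hcont.intervalIntegrable 0 1)).symm
  have key : |g (H + V) - g H - fderiv ℝ g H V| ≤ M / 2 * ‖V‖ ^ 2 := by
    have hu0 : u 0 = H := by simp [hu_def]
    have hu1 : u 1 = H + V := by simp [hu_def]
    have h2 : g (H + V) - g H - fderiv ℝ g H V
        = ∫ t in (0:ℝ)..1, (fderiv ℝ g (u t) V - fderiv ℝ g H V) := by
      rw [intervalIntegral.integral_sub (hcont.intervalIntegrable 0 1)
        (intervalIntegrable_const), intervalIntegral.integral_const]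
      rw [← hFTC, hu0, hu1]
      simp only [smul_eq_mul]
      ring
    rw [h2]
    have hb : |∫ t in (0:ℝ)..1, (fderiv ℝ g (u t) V - fderiv ℝ g H V)|
        ≤ ∫ t in (0:ℝ)..1, (M * ‖V‖ ^ 2) * t := by
      apply intervalIntegral.abs_integral_le_integral_abs (by norm_num) |>.trans
      apply intervalIntegral.integral_mono_on (by norm_num)
      · exact (hcont.sub continuous_const).abs.intervalIntegrable 0 1
      · exact (continuous_const.mul continuous_id).intervalIntegrable 0 1
      · intro t ht
        have := hlip t ht
        rw [hu0] at this
        simpa using this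
    have : ∫ t in (0:ℝ)..1, (M * ‖V‖ ^ 2) * t = M / 2 * ‖V‖ ^ 2 := by
      rw [intervalIntegral.integral_const_mul, integral_id]
      ring
    rw [this] at hb; exact hb
  have hgrad : ‖gradient g H‖ = ‖fderiv ℝ g H‖ := by
    rw [gradient]
    exact LinearIsometryEquiv.norm_map _ _
  have h3 : |fderiv ℝ g H V| ≤ ‖gradient g H‖ * ‖V‖ := by
    rw [hgrad]
    exact (fderiv ℝ g H).le_opNorm V
  calc |g (H + V) - g H| ≤ |fderiv ℝ g H V| + |g (H + V) - g H - fderiv ℝ g H V| := by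
        have he : g (H + V) - g H = fderiv ℝ g H V + (g (H + V) - g H - fderiv ℝ g H V) := by
          ring
        have hab := abs_add_le (fderiv ℝ g H V) (g (H + V) - g H - fderiv ℝ g H V)
        rw [← he] at hab; exact hab
    _ ≤ ‖gradient g H‖ * ‖V‖ + M / 2 * ‖V‖ ^ 2 := add_le_add h3 key

/-- Main error-estimation theorem: there is a constant `K > 0` depending only on `C` and `n`
such that for any random matrix `ε ∈ ℝ^{n×c}` (viewed as a Euclidean space with the
Frobenius inner product) with entrywise sub-Gaussian tails scaled by `λ γᵢⱼ / √d`, and any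
`C²` function `g` with Hessian bounded by `M`, with probability at least `0.99`,
`|g(H+ε) - g(H)| ≤ K λ √(log c / d) ‖γ‖_F ‖∇g(H)‖_F + (M/2) K² λ² (log c / d) ‖γ‖_F²`. -/
theorem stmt5 (C : ℝ) (hC : 0 < C) (n : ℕ) (hn : 0 < n) :
    ∃ K : ℝ, 0 < K ∧
      ∀ (c : ℕ), 2 ≤ c → ∀ (d : ℕ), 0 < d → ∀ (lam : ℝ), 0 < lam →
      ∀ (γ : EuclideanSpace ℝ (Fin n × Fin c)), (∀ i j, 0 < γ (i, j)) →
      ∀ (Ω : Type) [MeasurableSpace Ω] (μ : Measure Ω) [IsProbabilityMeasure μ]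
        (ε : Ω → EuclideanSpace ℝ (Fin n × Fin c)),
      (∀ i j, ∀ t : ℝ, 0 < t →
        μ {ω | t < |ε ω (i, j)|} ≤
          ENNReal.ofReal (2 * Real.exp (-(C * t ^ 2 * d) / (lam ^ 2 * (γ (i, j)) ^ 2)))) →
      ∀ (g : EuclideanSpace ℝ (Fin n × Fin c) → ℝ), ContDiff ℝ 2 g →
      ∀ (M : ℝ), 0 ≤ M →
      (∀ X E : EuclideanSpace ℝ (Fin n × Fin c),
        |fderiv ℝ (fderiv ℝ g) X E E| ≤ M * ‖E‖ ^ 2) →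
      ∀ (H : EuclideanSpace ℝ (Fin n × Fin c)),
      ENNReal.ofReal 0.99 ≤
        μ {ω | |g (H + ε ω) - g H| ≤
          K * lam * Real.sqrt (Real.log c / d) * ‖γ‖ * ‖gradient g H‖ +
          M / 2 * K ^ 2 * lam ^ 2 * (Real.log c / d) * ‖γ‖ ^ 2} := by
  -- choose the constant
  obtain ⟨a, ha_def⟩ : ∃ a : ℝ, a = 1 + Real.log (200 * n) / Real.log 2 := ⟨_, rfl⟩
  have hlog2 : (0:ℝ) < Real.log 2 := Real.log_pos (by norm_num)
  have h200n : (1:ℝ) < 200 * n := by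
    have : (1:ℝ) ≤ n := by exact_mod_cast hn
    nlinarith
  have hlogn : (0:ℝ) < Real.log (200 * n) := Real.log_pos h200n
  have ha1 : (1:ℝ) ≤ a := by
    rw [ha_def]
    have : 0 ≤ Real.log (200 * n) / Real.log 2 := by positivity
    linarith
  have ha0 : (0:ℝ) < a := by linarith
  obtain ⟨K, hK_def⟩ : ∃ K : ℝ, K = Real.sqrt (a / C) := ⟨_, rfl⟩
  have hK : 0 < K := hK_def ▸ Real.sqrt_pos.mpr (by positivity)
  have hKsq : K ^ 2 = a / C := by rw [hK_def]; exact Real.sq_sqrt (by positivity)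
  have hCK : C * K ^ 2 = a := by rw [hKsq]; field_simp
  refine ⟨K, hK, ?_⟩
  intro c hc d hd lam hlam γ hγ Ω _ μ _ ε htail g hg M hM hHess H
  have hlogc : (0:ℝ) < Real.log c := by
    apply Real.log_pos; exact_mod_cast (by omega : 1 < c)
  have hd' : (0:ℝ) < d := by exact_mod_cast hd
  obtain ⟨L, hL_def⟩ : ∃ L : ℝ, L = Real.log c / d := ⟨_, rfl⟩
  have hL : 0 < L := by rw [hL_def]; positivity
  have hsqL : Real.sqrt L ^ 2 = L := Real.sq_sqrt hL.le
  have hLd : L * (d:ℝ) = Real.log c := by rw [hL_def]; field_simp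
  -- thresholds
  obtain ⟨t, ht_eval⟩ : ∃ t : Fin n × Fin c → ℝ,
      ∀ p, t p = K * lam * γ p * Real.sqrt L := ⟨_, fun _ => rfl⟩
  have hγp : ∀ p : Fin n × Fin c, 0 < γ p := fun p => hγ p.1 p.2
  have ht : ∀ p, 0 < t p := fun p => by
    rw [ht_eval]
    have := hγp p
    positivity
  obtain ⟨B, hB_def⟩ : ∃ B : Set Ω, B = ⋃ p : Fin n × Fin c, {ω | t p < |ε ω p|} := ⟨_, rfl⟩
  obtain ⟨R, hR_def⟩ : ∃ R : ℝ, R = K * lam * Real.sqrt L * ‖γ‖ := ⟨_, rfl⟩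
  have hR0 : 0 ≤ R := by rw [hR_def]; positivity
  have hRsq : R ^ 2 = K ^ 2 * lam ^ 2 * L * ‖γ‖ ^ 2 := by
    rw [hR_def, mul_pow, mul_pow, mul_pow, hsqL]
  -- good event is contained in the target set
  have hsub : Bᶜ ⊆ {ω | |g (H + ε ω) - g H| ≤
      K * lam * Real.sqrt (Real.log c / d) * ‖γ‖ * ‖gradient g H‖ +
      M / 2 * K ^ 2 * lam ^ 2 * (Real.log c / d) * ‖γ‖ ^ 2} := by
    intro ω hω
    simp only [hB_def, Set.compl_iUnion, Set.mem_iInter, Set.mem_compl_iff, Set.mem_setOf_eq,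
      not_lt] at hω
    have hnorm : ‖ε ω‖ ≤ R := by
      have h1 : ‖ε ω‖ = Real.sqrt (∑ p, ‖ε ω p‖ ^ 2) := by
        rw [EuclideanSpace.norm_eq]
      have h2 : ‖γ‖ = Real.sqrt (∑ p, ‖γ p‖ ^ 2) := by
        rw [EuclideanSpace.norm_eq]
      have hsum : ∑ p, ‖ε ω p‖ ^ 2 ≤ ∑ p, (K * lam * Real.sqrt L) ^ 2 * ‖γ p‖ ^ 2 := by
        apply Finset.sum_le_sum
        intro p _
        have h3 : |ε ω p| ≤ t p := hω p
        have h4 : ‖ε ω p‖ ^ 2 ≤ (t p) ^ 2 := by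
          rw [Real.norm_eq_abs]
          exact pow_le_pow_left₀ (abs_nonneg _) h3 2
        refine h4.trans (le_of_eq ?_)
        rw [ht_eval, Real.norm_eq_abs, sq_abs]
        ring
      rw [h1, hR_def]
      rw [← Finset.mul_sum] at hsum
      calc Real.sqrt (∑ p, ‖ε ω p‖ ^ 2)
          ≤ Real.sqrt ((K * lam * Real.sqrt L) ^ 2 * ∑ p, ‖γ p‖ ^ 2) := Real.sqrt_le_sqrt hsum
        _ = K * lam * Real.sqrt L * ‖γ‖ := by
            rw [Real.sqrt_mul (by positivity), Real.sqrt_sq (by positivity), h2]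
    have htay := taylor_aux g hg M hM hHess H (ε ω)
    simp only [Set.mem_setOf_eq]
    rw [← hL_def]
    calc |g (H + ε ω) - g H| ≤ ‖gradient g H‖ * ‖ε ω‖ + M / 2 * ‖ε ω‖ ^ 2 := htay
      _ ≤ ‖gradient g H‖ * R + M / 2 * R ^ 2 := by
          have h4 : ‖ε ω‖ ^ 2 ≤ R ^ 2 := pow_le_pow_left₀ (norm_nonneg _) hnorm 2
          have h5 : ‖gradient g H‖ * ‖ε ω‖ ≤ ‖gradient g H‖ * R :=
            mul_le_mul_of_nonneg_left hnorm (norm_nonneg _)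
          nlinarith
      _ = K * lam * Real.sqrt L * ‖γ‖ * ‖gradient g H‖ +
          M / 2 * K ^ 2 * lam ^ 2 * L * ‖γ‖ ^ 2 := by
          rw [hRsq, hR_def]; ring
  -- tail bound on the bad event
  have hbad : μ B ≤ ENNReal.ofReal 0.01 := by
    have h1 : μ B ≤ ∑ p : Fin n × Fin c, μ {ω | t p < |ε ω p|} := by
      rw [hB_def]
      exact (measure_iUnion_le _).trans (le_of_eq (tsum_fintype _))
    have h2 : ∀ p : Fin n × Fin c, μ {ω | t p < |ε ω p|}
        ≤ ENNReal.ofReal (2 * Real.exp (-(a * Real.log c))) := by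
      rintro ⟨i, j⟩
      have h3 := htail i j (t (i, j)) (ht (i, j))
      refine h3.trans (le_of_eq ?_)
      congr 2
      have htp2 : t (i, j) ^ 2 = K ^ 2 * lam ^ 2 * (γ (i, j)) ^ 2 * L := by
        rw [ht_eval, mul_pow, mul_pow, mul_pow, hsqL]
      have hlamne : lam ≠ 0 := hlam.ne'
      have hγne : γ (i, j) ≠ 0 := (hγ i j).ne'
      rw [htp2, ← hCK, ← hLd]
      field_simp
    have h4 : (∑ p : Fin n × Fin c, μ {ω | t p < |ε ω p|})
        ≤ ENNReal.ofReal ((n * c : ℕ) * (2 * Real.exp (-(a * Real.log c)))) := by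
      calc (∑ p : Fin n × Fin c, μ {ω | t p < |ε ω p|})
          ≤ ∑ _p : Fin n × Fin c, ENNReal.ofReal (2 * Real.exp (-(a * Real.log c))) :=
            Finset.sum_le_sum (fun p _ => h2 p)
        _ = ENNReal.ofReal ((n * c : ℕ) * (2 * Real.exp (-(a * Real.log c)))) := by
            rw [Finset.sum_const, Finset.card_univ, Fintype.card_prod, Fintype.card_fin,
              Fintype.card_fin, nsmul_eq_mul, ← ENNReal.ofReal_natCast (n * c),
              ← ENNReal.ofReal_mul (by positivity)]
    have h5 : ((n * c : ℕ) : ℝ) * (2 * Real.exp (-(a * Real.log c))) ≤ 0.01 := by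
      have hexp : Real.exp (-(a * Real.log c))
          = Real.exp (-Real.log c) * Real.exp (-((a - 1) * Real.log 2)) *
            Real.exp (-((a-1) * (Real.log c - Real.log 2))) := by
        rw [← Real.exp_add, ← Real.exp_add]; ring_nf
      have hlc2 : Real.log 2 ≤ Real.log c := by
        apply Real.log_le_log (by norm_num)
        exact_mod_cast hc
      have he1 : Real.exp (-((a-1) * (Real.log c - Real.log 2))) ≤ 1 := by
        apply Real.exp_le_one_iff.mpr
        nlinarith
      have he2 : Real.exp (-Real.log c) = 1 / c := by
        rw [Real.exp_neg, Real.exp_log (by positivity : (0:ℝ) < c)]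
        ring
      have he3 : Real.exp (-((a - 1) * Real.log 2)) = 1 / (200 * n) := by
        have hh : (a - 1) * Real.log 2 = Real.log (200 * n) := by
          rw [ha_def]; field_simp; ring
        rw [hh, Real.exp_neg, Real.exp_log (by positivity)]
        ring
      have hc0 : (0:ℝ) < c := by positivity
      have hn0 : (0:ℝ) < n := by exact_mod_cast hn
      have hfinal : ((n * c : ℕ) : ℝ) * (2 * Real.exp (-(a * Real.log c)))
          ≤ (n * c : ℝ) * (2 * ((1/c) * (1/(200*n)) * 1)) := by
        push_cast
        rw [hexp, he2, he3]
        gcongr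
      refine hfinal.trans (le_of_eq ?_)
      field_simp
      ring
    exact h1.trans (h4.trans (ENNReal.ofReal_le_ofReal h5))
  -- conclude
  have hcompl : ENNReal.ofReal 0.99 ≤ μ Bᶜ := by
    have h1 : (1 : ENNReal) ≤ μ B + μ Bᶜ := by
      rw [← measure_univ (μ := μ), ← Set.union_compl_self B]
      exact measure_union_le _ _
    have h2 : (1 : ENNReal) = ENNReal.ofReal 0.01 + ENNReal.ofReal 0.99 := by
      rw [← ENNReal.ofReal_add (by norm_num) (by norm_num)]
      norm_num
    have h3 : ENNReal.ofReal 0.01 + ENNReal.ofReal 0.99 ≤ ENNReal.ofReal 0.01 + μ Bᶜ := by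
      refine le_trans (le_trans (le_of_eq h2.symm) h1) ?_
      gcongr
    exact (ENNReal.add_le_add_iff_left ENNReal.ofReal_ne_top).mp h3
  exact hcompl.trans (measure_mono hsub)
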